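/- Let K < K*, let Q_K be a K×K stochastic matrix with positive entries and Q̃ the K*×K* split matrix obtained by splitting state K into K*−K+1 equally weighted copies as above. Let φ_K = (Q_K; θ_1, ..., θ_K) and φ̃ = (Q̃; θ_1, ..., θ_{K−1}, θ_K, θ_K, ..., θ_K) (the last K*−K+1 emission parameters all equal θ_K). Then for every n and every observation sequence y_{1:n}, the stationary HMM likelihoods agree: p_K(y_{1:n} | φ_K) = p_{K*}(y_{1:n} | φ̃). -/

import Mathlib

/-- Stationary likelihood of a `K`-state HMM (as in the paper). -/
def hmmLik {𝓨 ϴ : Type*} (K n : ℕ) (Q : Fin K → Fin K → ℝ) (μ : Fin K → ℝ)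
    (f : 𝓨 → ϴ → ℝ) (θv : Fin K → ϴ) (y : Fin (n + 1) → 𝓨) : ℝ :=
  ∑ x : Fin (n + 1) → Fin K,
    μ (x 0) * (∏ i : Fin n, Q (x i.castSucc) (x i.succ)) * ∏ i, f (y i) (θv (x i))

/-- The map from split states back to original states. -/
def splitEmb (K Kstar : ℕ) (hK : 0 < K) (k : Fin Kstar) : Fin K :=
  ⟨min k.val (K - 1), by omega⟩

/-- The split transition matrix: the last state of a `K`-state chain is split into
`K* − K + 1` states with equal probabilities. -/
noncomputable def splitQ (K Kstar : ℕ) (hK : 0 < K) (Q : Fin K → Fin K → ℝ)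
    (k ℓ : Fin Kstar) : ℝ :=
  Q (splitEmb K Kstar hK k) (splitEmb K Kstar hK ℓ) *
    (if K - 1 ≤ ℓ.val then (((Kstar - K + 1 : ℕ) : ℝ))⁻¹ else 1)

/-- The split invariant vector. -/
noncomputable def splitμ (K Kstar : ℕ) (hK : 0 < K) (μ : Fin K → ℝ) (k : Fin Kstar) : ℝ :=
  μ (splitEmb K Kstar hK k) * (if K - 1 ≤ k.val then (((Kstar - K + 1 : ℕ) : ℝ))⁻¹ else 1)

/-- The weight attached to a split state. -/
noncomputable def splitW (K Kstar : ℕ) (ℓ : Fin Kstar) : ℝ :=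
  if K - 1 ≤ ℓ.val then (((Kstar - K + 1 : ℕ) : ℝ))⁻¹ else 1

lemma fiber_weight_sum (K Kstar : ℕ) (hK : 0 < K) (hKK : K < Kstar) (k : Fin K) :
    ∑ ℓ ∈ Finset.univ.filter (fun ℓ : Fin Kstar => splitEmb K Kstar hK ℓ = k),
      splitW K Kstar ℓ = 1 := by
  by_cases h : K - 1 ≤ k.val
  · have hk : k.val = K - 1 := by omega
    have hfil : Finset.univ.filter (fun ℓ : Fin Kstar => splitEmb K Kstar hK ℓ = k)
        = Finset.Ici (⟨K - 1, by omega⟩ : Fin Kstar) := by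
      ext ℓ
      simp only [Finset.mem_filter, Finset.mem_univ, true_and, Finset.mem_Ici,
        splitEmb, Fin.ext_iff, Fin.le_def]
      omega
    have hcard : (Finset.Ici (⟨K - 1, by omega⟩ : Fin Kstar)).card = Kstar - K + 1 := by
      rw [Fin.card_Ici]; simp only [Fin.val_mk]; omega
    have hW : ∀ ℓ ∈ Finset.Ici (⟨K - 1, by omega⟩ : Fin Kstar),
        splitW K Kstar ℓ = (((Kstar - K + 1 : ℕ) : ℝ))⁻¹ := by
      intro ℓ hℓ
      rw [Finset.mem_Ici, Fin.le_def] at hℓ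
      simp [splitW, hℓ]
    rw [hfil, Finset.sum_congr rfl hW, Finset.sum_const, hcard, nsmul_eq_mul]
    rw [mul_inv_cancel₀]
    positivity
  · have hfil : Finset.univ.filter (fun ℓ : Fin Kstar => splitEmb K Kstar hK ℓ = k)
        = {(⟨k.val, by omega⟩ : Fin Kstar)} := by
      ext ℓ
      simp only [Finset.mem_filter, Finset.mem_univ, true_and, Finset.mem_singleton,
        splitEmb, Fin.ext_iff]
      omega
    rw [hfil, Finset.sum_singleton, splitW]
    exact if_neg h

/-- Splitting the last state of a `K`-state HMM into `K* − K + 1` equally weighted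
copies, all carrying the same emission parameter as the original last state, leaves the
stationary likelihood of every observation sequence unchanged:
`p_K(y_{1:n} | φ_K) = p_{K*}(y_{1:n} | φ̃)`. -/
theorem split_hmm_likelihood_eq
    {𝓨 ϴ : Type*} (K Kstar n : ℕ) (hK : 0 < K) (hKK : K < Kstar)
    (Q : Fin K → Fin K → ℝ)
    (hQpos : ∀ k ℓ, 0 < Q k ℓ) (hQrow : ∀ k, ∑ ℓ, Q k ℓ = 1)
    (μ : Fin K → ℝ) (hμnonneg : ∀ k, 0 ≤ μ k) (hμsum : ∑ k, μ k = 1)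
    (hμinv : ∀ ℓ, ∑ k, μ k * Q k ℓ = μ ℓ)
    (f : 𝓨 → ϴ → ℝ) (θv : Fin K → ϴ) (y : Fin (n + 1) → 𝓨) :
    hmmLik K n Q μ f θv y =
      hmmLik Kstar n (splitQ K Kstar hK Q) (splitμ K Kstar hK μ) f
        (fun k => θv (splitEmb K Kstar hK k)) y := by
  classical
  set π := splitEmb K Kstar hK with hπ
  set w := splitW K Kstar with hw
  -- rewrite each split-path term as (original term of projected path) * ∏ weights
  have hterm : ∀ z : Fin (n + 1) → Fin Kstar,
      splitμ K Kstar hK μ (z 0) *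
          (∏ i : Fin n, splitQ K Kstar hK Q (z i.castSucc) (z i.succ)) *
          ∏ i, f (y i) (θv (π (z i)))
        = (μ (π (z 0)) * (∏ i : Fin n, Q (π (z i.castSucc)) (π (z i.succ))) *
            ∏ i, f (y i) (θv (π (z i)))) * ∏ i, w (z i) := by
    intro z
    have h1 : splitμ K Kstar hK μ (z 0) = μ (π (z 0)) * w (z 0) := rfl
    have h2 : ∀ i : Fin n, splitQ K Kstar hK Q (z i.castSucc) (z i.succ)
        = Q (π (z i.castSucc)) (π (z i.succ)) * w (z i.succ) := fun i => rfl
    rw [h1, Finset.prod_congr rfl (fun i _ => h2 i), Finset.prod_mul_distrib]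
    have h3 : (∏ i : Fin (n + 1), w (z i))
        = w (z 0) * ∏ i : Fin n, w (z i.succ) := Fin.prod_univ_succ _
    rw [h3]; ring
  unfold hmmLik
  rw [Finset.sum_congr rfl (fun z _ => hterm z)]
  -- group the split paths by their projection
  rw [← Finset.sum_fiberwise (Finset.univ : Finset (Fin (n + 1) → Fin Kstar))
      (fun z => π ∘ z)
      (fun z => (μ (π (z 0)) * (∏ i : Fin n, Q (π (z i.castSucc)) (π (z i.succ))) *
          ∏ i, f (y i) (θv (π (z i)))) * ∏ i, w (z i))]
  refine Finset.sum_congr rfl fun x _ => ?_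
  -- within a fiber, the projected term is constant
  have hconst : ∀ z ∈ Finset.univ.filter (fun z : Fin (n + 1) → Fin Kstar => π ∘ z = x),
      (μ (π (z 0)) * (∏ i : Fin n, Q (π (z i.castSucc)) (π (z i.succ))) *
          ∏ i, f (y i) (θv (π (z i)))) * ∏ i, w (z i)
        = (μ (x 0) * (∏ i : Fin n, Q (x i.castSucc) (x i.succ)) *
            ∏ i, f (y i) (θv (x i))) * ∏ i, w (z i) := by
    intro z hz
    rw [Finset.mem_filter] at hz
    have h : ∀ i, π (z i) = x i := fun i => congrFun hz.2 i
    simp only [h]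
  rw [Finset.sum_congr rfl hconst, ← Finset.mul_sum]
  -- the weights in each fiber sum to 1
  have hfib : Finset.univ.filter (fun z : Fin (n + 1) → Fin Kstar => π ∘ z = x)
      = Fintype.piFinset (fun i => Finset.univ.filter (fun ℓ : Fin Kstar => π ℓ = x i)) := by
    ext z
    simp [Fintype.mem_piFinset, funext_iff]
  rw [hfib, ← Finset.prod_univ_sum]
  rw [Finset.prod_congr rfl (fun i _ => fiber_weight_sum K Kstar hK hKK (x i))]
  simp
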